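/- Let X be a locally compact Hausdorff space and k a real-valued continuous kernel on X × X such that the RKHS H_k separates points of X. Then for every compact set K ⊆ X, every ε > 0 and every f ∈ C(K), there exist real numbers c_1,…,c_N and points a_1,…,a_N ∈ X such that sup_{x∈K} |f(x) − ∑_{j=1}^N c_j exp(k(x,a_j))| < ε. -/

import Mathlib

open scoped InnerProductSpace

open scoped ENNReal


private lemma aux_pow_tsum {ι : Type*} {g : ι → ℝ} (hg : Summable fun i => |g i|) :
    ∀ n : ℕ, Summable (fun α : Fin n → ι => |∏ l, g (α l)|) ∧
      (∑' α : Fin n → ι, ∏ l, g (α l)) = (∑' i, g i) ^ n := by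
  intro n
  induction n with
  | zero =>
      constructor
      · exact Summable.of_finite
      · simp [tsum_eq_single (Fin.elim0 : Fin 0 → ι)
          (fun b hb => absurd (funext fun i => i.elim0) hb)]
  | succ n ih =>
      have hgn : Summable fun i => ‖g i‖ := by simpa [Real.norm_eq_abs] using hg
      have hpn : Summable fun β : Fin n → ι => ‖∏ l, g (β l)‖ := by
        simpa only [Real.norm_eq_abs] using ih.1
      let e : (ι × (Fin n → ι)) ≃ (Fin (n + 1) → ι) :=
        { toFun := fun p => Fin.cons p.1 p.2
          invFun := fun α => (α 0, fun i => α i.succ)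
          left_inv := fun p => by simp
          right_inv := fun α => Fin.cons_self_tail α }
      have he : ∀ p : ι × (Fin n → ι), e p = Fin.cons (α := fun _ => ι) p.1 p.2 :=
        fun p => rfl
      have key : ∀ p : ι × (Fin n → ι),
          (∏ l, g (e p l)) = g p.1 * ∏ l, g (p.2 l) := by
        intro p
        rw [he p, Fin.prod_univ_succ]
        simp
      have hsum2 : Summable (fun p : ι × (Fin n → ι) => |g p.1| * |∏ l, g (p.2 l)|) := by
        have := summable_mul_of_summable_norm (f := fun i => |g i|)
          (g := fun β : Fin n → ι => |∏ l, g (β l)|)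
          (by simpa only [Real.norm_eq_abs, abs_abs] using hg) (by simpa only [Real.norm_eq_abs, abs_abs] using ih.1)
        exact this
      constructor
      · rw [← e.summable_iff]
        have : ((fun α : Fin (n+1) → ι => |∏ l, g (α l)|) ∘ e)
            = fun p : ι × (Fin n → ι) => |g p.1| * |∏ l, g (p.2 l)| := by
          funext p
          simp only [Function.comp_apply]
          rw [key p, abs_mul]
        rw [this]
        exact hsum2
      · have h1 : ∑' α : Fin (n+1) → ι, ∏ l, g (α l)
            = ∑' p : ι × (Fin n → ι), g p.1 * ∏ l, g (p.2 l) := by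
          rw [← e.tsum_eq]
          exact tsum_congr key
        have h2 := tsum_mul_tsum_of_summable_norm (f := g)
          (g := fun β : Fin n → ι => ∏ l, g (β l)) hgn hpn
        rw [h1, ← h2, ih.2, pow_succ, mul_comm]

private lemma aux_exp_kernel {H : Type*} [NormedAddCommGroup H] [InnerProductSpace ℝ H]
    {ι : Type*} (b : HilbertBasis ι ℝ H) :
    ∃ Ψ : H → lp (fun _ : (Σ n : ℕ, (Fin n → ι)) => ℝ) 2,
      (∀ v w : H, ⟪Ψ v, Ψ w⟫_ℝ = Real.exp ⟪v, w⟫_ℝ) ∧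
      (∀ (v : H) (j : Σ n : ℕ, (Fin n → ι)),
        Ψ v j = (∏ l, ⟪v, b (j.2 l)⟫_ℝ) / Real.sqrt (Nat.factorial j.1)) := by
  classical
  set J := (Σ n : ℕ, (Fin n → ι)) with hJ
  set ψ : H → J → ℝ := fun v j => (∏ l, ⟪v, b (j.2 l)⟫_ℝ) / Real.sqrt (Nat.factorial j.1) with hψ
  have hsq : ∀ v : H, Summable fun i => ⟪v, b i⟫_ℝ * ⟪v, b i⟫_ℝ := by
    intro v
    have := b.summable_inner_mul_inner v v
    simpa [real_inner_comm] using this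
  have habs : ∀ v w : H, Summable fun i => |⟪v, b i⟫_ℝ * ⟪w, b i⟫_ℝ| := by
    intro v w
    refine Summable.of_nonneg_of_le (fun i => abs_nonneg _) (fun i => ?_)
      (((hsq v).add (hsq w)).mul_left (1/2 : ℝ))
    have h1 := abs_mul (⟪v, b i⟫_ℝ) (⟪w, b i⟫_ℝ)
    nlinarith [sq_nonneg (|⟪v, b i⟫_ℝ| - |⟪w, b i⟫_ℝ|), abs_nonneg (⟪v, b i⟫_ℝ),
      abs_nonneg (⟪w, b i⟫_ℝ), sq_abs (⟪v, b i⟫_ℝ), sq_abs (⟪w, b i⟫_ℝ),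
      abs_mul_abs_self (⟪v, b i⟫_ℝ), abs_mul_abs_self (⟪w, b i⟫_ℝ)]
  have htsum : ∀ v w : H, ∑' i, ⟪v, b i⟫_ℝ * ⟪w, b i⟫_ℝ = ⟪v, w⟫_ℝ := by
    intro v w
    have := b.tsum_inner_mul_inner v w
    simpa [real_inner_comm] using this
  have hfib : ∀ (v w : H) (n : ℕ) (α : Fin n → ι),
      ψ v ⟨n, α⟩ * ψ w ⟨n, α⟩
        = (∏ l, (⟪v, b (α l)⟫_ℝ * ⟪w, b (α l)⟫_ℝ)) / Nat.factorial n := by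
    intro v w n α
    simp only [hψ]
    rw [div_mul_div_comm, Real.mul_self_sqrt (by positivity), ← Finset.prod_mul_distrib]
  have habs2 : ∀ v w : H, Summable fun i => |(|⟪v, b i⟫_ℝ * ⟪w, b i⟫_ℝ|)| := by
    intro v w; simpa [abs_abs] using habs v w
  have hfibsum : ∀ (v w : H) (n : ℕ),
      ∑' α : Fin n → ι, |ψ v ⟨n, α⟩ * ψ w ⟨n, α⟩|
        = (∑' i, |⟪v, b i⟫_ℝ * ⟪w, b i⟫_ℝ|) ^ n / Nat.factorial n := by
    intro v w n
    have h3 := (aux_pow_tsum (habs2 v w) n).2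
    have h4 : ∀ α : Fin n → ι, |ψ v ⟨n, α⟩ * ψ w ⟨n, α⟩|
        = (∏ l, |⟪v, b (α l)⟫_ℝ * ⟪w, b (α l)⟫_ℝ|) / Nat.factorial n := by
      intro α
      rw [hfib, abs_div, Finset.abs_prod, abs_of_nonneg (by positivity : (0:ℝ) ≤ (Nat.factorial n : ℝ))]
    rw [tsum_congr h4, tsum_div_const, h3]
  have hJabs : ∀ v w : H, Summable fun j : J => |ψ v j * ψ w j| := by
    intro v w
    apply (summable_sigma_of_nonneg (fun j => abs_nonneg _)).2
    constructor
    · intro n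
      have := ((aux_pow_tsum (habs2 v w) n).1).div_const (Nat.factorial n : ℝ)
      refine this.congr fun α => ?_
      have h4 : |ψ v ⟨n, α⟩ * ψ w ⟨n, α⟩|
          = (∏ l, |⟪v, b (α l)⟫_ℝ * ⟪w, b (α l)⟫_ℝ|) / Nat.factorial n := by
        rw [hfib, abs_div, Finset.abs_prod, abs_of_nonneg (by positivity : (0:ℝ) ≤ (Nat.factorial n : ℝ))]
      rw [h4]
      congr 1
      exact abs_of_nonneg (Finset.prod_nonneg fun _ _ => abs_nonneg _)
    · refine (Real.summable_pow_div_factorial (∑' i, |⟪v, b i⟫_ℝ * ⟪w, b i⟫_ℝ|)).congr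
        fun n => ?_
      exact (hfibsum v w n).symm
  have hJsum : ∀ v w : H, Summable fun j : J => ψ v j * ψ w j :=
    fun v w => (hJabs v w).of_abs
  have hinner : ∀ v w : H, ∑' j : J, ψ v j * ψ w j = Real.exp ⟪v, w⟫_ℝ := by
    intro v w
    rw [(hJsum v w).tsum_sigma]
    have h5 : ∀ n : ℕ, ∑' α : Fin n → ι, ψ v ⟨n, α⟩ * ψ w ⟨n, α⟩ = ⟪v, w⟫_ℝ ^ n / Nat.factorial n := by
      intro n
      rw [tsum_congr (hfib v w n), tsum_div_const, (aux_pow_tsum (habs v w) n).2, htsum]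
    rw [tsum_congr h5, Real.exp_eq_exp_ℝ, NormedSpace.exp_eq_tsum_div]
  have hmem : ∀ v : H, Memℓp (ψ v) 2 := by
    intro v
    apply memℓp_gen
    refine (hJsum v v).congr fun j => ?_
    rw [show ((2 : ℝ≥0∞).toReal) = ((2 : ℕ) : ℝ) by simp, Real.rpow_natCast]
    rw [pow_two, Real.norm_eq_abs, abs_mul_abs_self]
  refine ⟨fun v => ⟨ψ v, hmem v⟩, fun v w => ?_, fun v j => rfl⟩
  rw [lp.inner_eq_tsum]
  simp only [RCLike.inner_apply, conj_trivial]
  exact (tsum_congr fun j => mul_comm _ _).trans (hinner v w)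

/-- Universal approximation: let `X` be a locally compact Hausdorff space and `k` a
real-valued continuous kernel on `X × X` whose RKHS `H_k` separates the points of `X`
(the RKHS is realized as the functions `x ↦ ⟪v, Φ x⟫` for a feature map `Φ : X → H`
with `k x y = ⟪Φ x, Φ y⟫`).  Then for every compact `K ⊆ X`, every `ε > 0` and every
continuous `f : K → ℝ` there are reals `c₁, …, c_N` and points `a₁, …, a_N ∈ X` with
`sup_{x ∈ K} |f x − ∑ⱼ cⱼ exp (k x aⱼ)| < ε`. -/
theorem universal_approximation_exp_kernel
    {X : Type*} [TopologicalSpace X] [LocallyCompactSpace X] [T2Space X]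
    (k : X → X → ℝ) (hcont : Continuous fun p : X × X => k p.1 p.2)
    {H : Type*} [NormedAddCommGroup H] [InnerProductSpace ℝ H] [CompleteSpace H]
    (Φ : X → H) (hk : ∀ x y, k x y = ⟪Φ x, Φ y⟫_ℝ)
    (hsep : ∀ x y : X, x ≠ y → ∃ v : H, ⟪v, Φ x⟫_ℝ ≠ ⟪v, Φ y⟫_ℝ)
    (K : Set X) (hK : IsCompact K) (f : C(K, ℝ)) (ε : ℝ) (hε : 0 < ε) :
    ∃ (N : ℕ) (c : Fin N → ℝ) (a : Fin N → X),
      ∀ x : K, |f x - ∑ j, c j * Real.exp (k x (a j))| < ε := by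
  classical
  have ksymm : ∀ x y, k x y = k y x := by
    intro x y; rw [hk, hk, real_inner_comm]
  obtain ⟨w', b, -⟩ := exists_hilbertBasis ℝ H
  obtain ⟨Ψ₀, hΨinner, hΨcoord⟩ := aux_exp_kernel b
  set Ψ : X → lp (fun _ : (Σ n : ℕ, (Fin n → ↥w')) => ℝ) 2 := fun a => Ψ₀ (Φ a) with hΨdef
  have hkxy : ∀ a c : X, ⟪Ψ a, Ψ c⟫_ℝ = Real.exp (k a c) := by
    intro a c
    rw [hΨdef]
    simp only
    rw [hΨinner, hk]
  -- continuity of the feature map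
  have hΦcont : Continuous Φ := by
    rw [continuous_iff_continuousAt]
    intro x
    rw [ContinuousAt, tendsto_iff_norm_sub_tendsto_zero]
    have heq : ∀ y : X, ‖Φ y - Φ x‖ = Real.sqrt (k y y - 2 * k y x + k x x) := by
      intro y
      have h1 : ‖Φ y - Φ x‖ ^ 2 = k y y - 2 * k y x + k x x := by
        rw [norm_sub_sq_real, hk, hk, hk, real_inner_self_eq_norm_sq, real_inner_self_eq_norm_sq]
        try ring
      rw [← h1, Real.sqrt_sq (norm_nonneg _)]
    have hcont1 : Continuous fun y : X => Real.sqrt (k y y - 2 * k y x + k x x) := by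
      apply Real.continuous_sqrt.comp
      have h2 : Continuous fun y : X => k y y :=
        hcont.comp (continuous_id.prodMk continuous_id)
      have h3 : Continuous fun y : X => k y x :=
        hcont.comp (continuous_id.prodMk continuous_const)
      exact (h2.sub (continuous_const.mul h3)).add continuous_const
    have hval : Real.sqrt (k x x - 2 * k x x + k x x) = 0 := by
      rw [show k x x - 2 * k x x + k x x = 0 by ring, Real.sqrt_zero]
    have := hcont1.tendsto x
    rw [hval] at this
    exact Filter.Tendsto.congr (fun y => (heq y).symm) this
  haveI : CompactSpace K := isCompact_iff_compactSpace.mp hK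
  -- the coordinate functions and monomials
  set φC : ↥w' → C(K, ℝ) := fun i =>
    ⟨fun x => ⟪Φ (x : X), b i⟫_ℝ,
      Continuous.inner (hΦcont.comp continuous_subtype_val) continuous_const⟩ with hφC
  set monoC : (Σ n : ℕ, (Fin n → ↥w')) → C(K, ℝ) := fun j => ∏ l, φC (j.2 l) with hmonoC
  set S : Set C(K, ℝ) := Set.range monoC with hS
  set A : Subalgebra ℝ C(K, ℝ) := Algebra.adjoin ℝ (Set.range φC) with hA
  -- separation of points
  have hAsep : A.SeparatesPoints := by
    intro x y hxy
    obtain ⟨v, hv⟩ := hsep x y (fun h => hxy (Subtype.ext h))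
    have hΦne : Φ (x : X) ≠ Φ (y : X) := fun h => hv (by rw [h])
    have hex : ∃ i, ⟪Φ (x : X), b i⟫_ℝ ≠ ⟪Φ (y : X), b i⟫_ℝ := by
      by_contra hcon
      push_neg at hcon
      refine hΦne (b.repr.injective ?_)
      ext i
      rw [b.repr_apply_apply, b.repr_apply_apply, real_inner_comm, hcon i, real_inner_comm]
    obtain ⟨i, hi⟩ := hex
    exact ⟨_, ⟨φC i, Algebra.subset_adjoin ⟨i, rfl⟩, rfl⟩, hi⟩
  -- the adjoin is inside the span of monomials
  have hAS : ∀ g ∈ A, g ∈ Submodule.span ℝ S := by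
    intro g hg
    refine Algebra.adjoin_induction (p := fun g _ => g ∈ Submodule.span ℝ S)
      ?_ ?_ ?_ ?_ hg
    · rintro g ⟨i, rfl⟩
      refine Submodule.subset_span ⟨⟨1, fun _ => i⟩, ?_⟩
      rw [hmonoC]
      exact Fin.prod_univ_one _
    · intro r
      have h1 : (1 : C(K, ℝ)) ∈ S := ⟨⟨0, Fin.elim0⟩, Fin.prod_univ_zero _⟩
      rw [Algebra.algebraMap_eq_smul_one]
      exact Submodule.smul_mem _ r (Submodule.subset_span h1)
    · intro g h _ _ hg' hh'
      exact Submodule.add_mem _ hg' hh'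
    · intro g h _ _ hg' hh'
      have hmul := Submodule.mul_mem_mul hg' hh'
      rw [Submodule.span_mul_span] at hmul
      refine Submodule.span_le.2 ?_ hmul
      rintro _ ⟨_, ⟨j, rfl⟩, _, ⟨j', rfl⟩, rfl⟩
      refine Submodule.subset_span ⟨⟨j.1 + j'.1, Fin.append j.2 j'.2⟩, ?_⟩
      rw [hmonoC]
      simp only
      rw [Fin.prod_univ_add]
      congr 1
      · exact Finset.prod_congr rfl fun l _ => by rw [Fin.append_left]
      · exact Finset.prod_congr rfl fun l _ => by rw [Fin.append_right]
  -- every element of the span is represented by a vector of F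
  have hrep : ∀ g ∈ Submodule.span ℝ S,
      ∃ u : lp (fun _ : (Σ n : ℕ, (Fin n → ↥w')) => ℝ) 2, ∀ x : K, g x = ⟪u, Ψ (x : X)⟫_ℝ := by
    intro g hg
    refine Submodule.span_induction (p := fun g _ =>
      ∃ u : lp (fun _ : (Σ n : ℕ, (Fin n → ↥w')) => ℝ) 2, ∀ x : K, g x = ⟪u, Ψ (x : X)⟫_ℝ)
      ?_ ?_ ?_ ?_ hg
    · rintro g ⟨j, rfl⟩
      refine ⟨Real.sqrt (Nat.factorial j.1) • lp.single 2 j (1 : ℝ), fun x => ?_⟩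
      rw [real_inner_smul_left, lp.inner_single_left, RCLike.inner_apply, conj_trivial, mul_one]
      rw [hΨdef]
      simp only
      rw [hΨcoord]
      have hne : Real.sqrt (Nat.factorial j.1) ≠ 0 := by positivity
      rw [mul_comm, div_mul_cancel₀ _ hne]
      rw [hmonoC]
      simp only [ContinuousMap.prod_apply]
      rfl
    · exact ⟨0, fun x => by simp⟩
    · rintro g h _ _ ⟨u, hu⟩ ⟨u', hu'⟩
      exact ⟨u + u', fun x => by
        simp only [ContinuousMap.add_apply, inner_add_left, hu x, hu' x]⟩
    · rintro r g _ ⟨u, hu⟩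
      exact ⟨r • u, fun x => by
        simp only [ContinuousMap.smul_apply, real_inner_smul_left, hu x, smul_eq_mul]⟩
  -- Stone-Weierstrass
  have hT := ContinuousMap.subalgebra_topologicalClosure_eq_top_of_separatesPoints A hAsep
  -- bound on the feature vectors over K
  obtain ⟨B, hB⟩ : ∃ B, ∀ x ∈ K, k x x ≤ B := by
    have h2 : Continuous fun x : X => k x x := hcont.comp (continuous_id.prodMk continuous_id)
    rcases (hK.image h2).bddAbove with ⟨B, hB⟩
    exact ⟨B, fun x hx => hB ⟨x, hx, rfl⟩⟩
  set C := Real.sqrt (Real.exp B) with hC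
  have hCpos : 0 < C := Real.sqrt_pos.2 (Real.exp_pos B)
  have hΨbound : ∀ x : K, ‖Ψ (x : X)‖ ≤ C := by
    intro x
    have h1 : ‖Ψ (x : X)‖ * ‖Ψ (x : X)‖ = Real.exp (k x x) := by
      rw [← real_inner_self_eq_norm_mul_norm, hkxy]
    have h2 : ‖Ψ (x : X)‖ = Real.sqrt (Real.exp (k x x)) := by
      rw [← h1, Real.sqrt_mul_self (norm_nonneg _)]
    rw [h2, hC]
    exact Real.sqrt_le_sqrt (Real.exp_le_exp.2 (hB x x.2))
  -- pick an algebra element close to f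
  have hf : f ∈ closure (A : Set C(K, ℝ)) := by
    have h1 : f ∈ A.topologicalClosure := by rw [hT]; trivial
    rwa [← Subalgebra.topologicalClosure_coe, SetLike.mem_coe]
  obtain ⟨g, hgA, hgf⟩ := Metric.mem_closure_iff.1 hf (ε / 2) (by positivity)
  obtain ⟨u, hu⟩ := hrep g (hAS g hgA)
  -- orthogonal projection onto the closed span of the feature vectors
  set M := (Submodule.span ℝ (Set.range Ψ)).topologicalClosure with hM
  haveI : CompleteSpace M := (Submodule.isClosed_topologicalClosure _).completeSpace_coe
  set u₀ := ((M.orthogonalProjectionOnto u : _) : lp (fun _ : (Σ n : ℕ, (Fin n → ↥w')) => ℝ) 2) with hu₀def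
  have hperp : ∀ a : X, ⟪u, Ψ a⟫_ℝ = ⟪u₀, Ψ a⟫_ℝ := by
    intro a
    have hm : Ψ a ∈ M :=
      (Submodule.le_topologicalClosure _) (Submodule.subset_span ⟨a, rfl⟩)
    have h1 := M.starProjection_inner_eq_zero u (Ψ a) hm
    rw [inner_sub_left, Submodule.starProjection_apply] at h1
    rw [hu₀def]
    linarith
  have hu₀mem : u₀ ∈ closure ((Submodule.span ℝ (Set.range Ψ) : Set (lp (fun _ : (Σ n : ℕ, (Fin n → ↥w')) => ℝ) 2))) := by
    exact (M.orthogonalProjectionOnto u).2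
  set δ := ε / (2 * C) with hδdef
  have hδ : 0 < δ := by positivity
  obtain ⟨w₀, hw₀mem, hw₀⟩ := Metric.mem_closure_iff.1 hu₀mem δ hδ
  obtain ⟨N, c, aa, hsum⟩ := Submodule.mem_span_set'.1 hw₀mem
  choose a ha using fun j : Fin N => (aa j).2
  refine ⟨N, c, a, fun x => ?_⟩
  have e1 : ∑ j, c j * Real.exp (k (x : X) (a j)) = ⟪w₀, Ψ (x : X)⟫_ℝ := by
    rw [← hsum, sum_inner]
    refine Finset.sum_congr rfl fun j _ => ?_
    rw [real_inner_smul_left, ← ha j, hkxy, ksymm]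
  have e2 : g x = ⟪u₀, Ψ (x : X)⟫_ℝ := (hu x).trans (hperp x)
  have e3 : |f x - g x| < ε / 2 := by
    rw [← Real.dist_eq]
    exact lt_of_le_of_lt (ContinuousMap.dist_apply_le_dist x) hgf
  have e4 : |⟪u₀, Ψ (x : X)⟫_ℝ - ⟪w₀, Ψ (x : X)⟫_ℝ| < ε / 2 := by
    rw [← inner_sub_left]
    have h1 := abs_real_inner_le_norm (u₀ - w₀) (Ψ (x : X))
    have h2 : ‖u₀ - w₀‖ * ‖Ψ (x : X)‖ ≤ ‖u₀ - w₀‖ * C :=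
      mul_le_mul_of_nonneg_left (hΨbound x) (norm_nonneg _)
    have h3 : ‖u₀ - w₀‖ < δ := by rwa [← dist_eq_norm]
    have h4 : ‖u₀ - w₀‖ * C < δ * C := mul_lt_mul_of_pos_right h3 hCpos
    have h5 : δ * C = ε / 2 := by
      rw [hδdef]
      field_simp
    linarith
  calc |f x - ∑ j, c j * Real.exp (k (x : X) (a j))|
      = |(f x - g x) + (⟪u₀, Ψ (x : X)⟫_ℝ - ⟪w₀, Ψ (x : X)⟫_ℝ)| := by
        rw [e1, e2]; ring_nf
    _ ≤ |f x - g x| + |⟪u₀, Ψ (x : X)⟫_ℝ - ⟪w₀, Ψ (x : X)⟫_ℝ| := abs_add_le _ _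
    _ < ε / 2 + ε / 2 := add_lt_add e3 e4
    _ = ε := by ring
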